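/- arXiv:2408.04727 — 2 statements merged into one kernel-verified Lean document; each statement's English description precedes it below -/
import Mathlib

section
/- Let α > 0 and let Δ, q be positive integers with q ≥ (1+α)Δ + 1. Let G be a partially q-colored graph of maximum degree at most Δ, let v be a free vertex of G, let w ∈ [0,1] with Z_G(w) > 0, and let j ∈ {1,…,q} be a color that is free at v (no pinned neighbor of v is colored j). Then P_{G,w}[Φ(v)=j] ≥ 1/(e^{1/α}·q). -/
attribute [local instance 10] Classical.propDecidable

noncomputable section

/-- A partially `q`-colored graph: a finite simple graph together with a set `S` of
pinned vertices and a pinning `pin` (only its values on `S` are relevant). -/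
structure PCG (q : ℕ) where
  V : Type
  fin : Fintype V
  G : SimpleGraph V
  S : Finset V
  pin : V → Fin q

namespace PCG

variable {q : ℕ}

instance (H : PCG q) : Fintype H.V := H.fin

/-- colorings agreeing with the pinning on the pinned set -/
def admissible (H : PCG q) (ψ : H.V → Fin q) : Prop :=
  ∀ u ∈ H.S, ψ u = H.pin u

/-- the number of monochromatic edges of a coloring -/
def mono (H : PCG q) (ψ : H.V → Fin q) : ℕ :=
  ((Finset.univ : Finset (Sym2 H.V)).filter
    (fun e => e ∈ H.G.edgeSet ∧ (e.map ψ).IsDiag)).card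

/-- the (complex) Potts partition function of a partially colored graph -/
def Z (H : PCG q) (w : ℂ) : ℂ :=
  ∑ ψ ∈ Finset.univ.filter (fun ψ : H.V → Fin q => H.admissible ψ), w ^ H.mono ψ

/-- the partition function restricted to colorings giving `v` the color `j` -/
def Zc (H : PCG q) (v : H.V) (j : Fin q) (w : ℂ) : ℂ :=
  ∑ ψ ∈ Finset.univ.filter
      (fun ψ : H.V → Fin q => H.admissible ψ ∧ ψ v = j), w ^ H.mono ψ

/-- the real Potts partition function -/
def Zr (H : PCG q) (w : ℝ) : ℝ :=
  ∑ ψ ∈ Finset.univ.filter (fun ψ : H.V → Fin q => H.admissible ψ), w ^ H.mono ψ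

/-- the real partition function restricted to colorings giving `v` the color `j` -/
def Zcr (H : PCG q) (v : H.V) (j : Fin q) (w : ℝ) : ℝ :=
  ∑ ψ ∈ Finset.univ.filter
      (fun ψ : H.V → Fin q => H.admissible ψ ∧ ψ v = j), w ^ H.mono ψ

/-- the marginal probability that `v` receives the color `j` -/
def Pr (H : PCG q) (v : H.V) (j : Fin q) (w : ℝ) : ℝ :=
  H.Zcr v j w / H.Zr w

/-- the neighborhood of a vertex -/
def nbhd (H : PCG q) (v : H.V) : Finset H.V :=
  Finset.univ.filter (fun u => H.G.Adj v u)

/-- the degree of a vertex -/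
def deg (H : PCG q) (v : H.V) : ℕ := (H.nbhd v).card

/-- the free degree of a vertex: its number of free neighbors -/
def freeDeg (H : PCG q) (v : H.V) : ℕ :=
  ((H.nbhd v).filter (fun u => u ∉ H.S)).card

/-- the number of pinned neighbors of `v` colored `j` -/
def cvec (H : PCG q) (v : H.V) (j : Fin q) : ℕ :=
  ((H.nbhd v).filter (fun u => u ∈ H.S ∧ H.pin u = j)).card

/-- the color `j` is blocked at `v`: some pinned neighbor of `v` is colored `j` -/
def blockedAt (H : PCG q) (v : H.V) (j : Fin q) : Prop :=
  ∃ u ∈ H.nbhd v, u ∈ H.S ∧ H.pin u = j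

/-- the set of colors that are free at `v` -/
def freeColors (H : PCG q) (v : H.V) : Finset (Fin q) :=
  Finset.univ.filter (fun j => ¬ H.blockedAt v j)

/-- the graph has maximum degree at most `Δ` -/
def maxDegLE (H : PCG q) (Δ : ℕ) : Prop := ∀ u, H.deg u ≤ Δ

/-- the class 𝒢•: `H` is connected, has max degree at most `Δ`, its pinned vertices
are leaves and form an independent set, and `v` is a free vertex -/
def GoodPair (Δ : ℕ) (H : PCG q) (v : H.V) : Prop :=
  H.G.Connected ∧ H.maxDegLE Δ ∧ (∀ u ∈ H.S, H.deg u = 1) ∧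
    (∀ u ∈ H.S, ∀ u' ∈ H.S, ¬ H.G.Adj u u') ∧ v ∉ H.S

/-- `Ḡ`: the graph obtained by deleting all pinned neighbors of `v` -/
def bar (H : PCG q) (v : H.V) : PCG q where
  V := ↥{u : H.V | ¬(u ∈ H.S ∧ H.G.Adj v u)}
  fin := inferInstance
  G := H.G.induce {u : H.V | ¬(u ∈ H.S ∧ H.G.Adj v u)}
  S := Finset.univ.filter (fun u => u.1 ∈ H.S)
  pin := fun u => H.pin u.1

/-- the vertex `v` viewed as a vertex of `Ḡ` -/
def barVert (H : PCG q) (v : H.V) : (H.bar v).V :=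
  ⟨v, fun h => H.G.loopless.irrefl v h.2⟩

/-- `G − v`: the graph obtained by deleting the vertex `v` -/
def deleteVert (H : PCG q) (v : H.V) : PCG q where
  V := ↥{u : H.V | u ≠ v}
  fin := inferInstance
  G := H.G.induce {u : H.V | u ≠ v}
  S := Finset.univ.filter (fun u => u.1 ∈ H.S)
  pin := fun u => H.pin u.1

/-- `G^{+ℓ}`: attach a new pinned leaf of color `ℓ` to the vertex `v` -/
def addLeaf (H : PCG q) (v : H.V) (ℓ : Fin q) : PCG q where
  V := Option H.V
  fin := inferInstance
  G := SimpleGraph.fromRel (fun a b =>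
    (∃ u u' : H.V, a = some u ∧ b = some u' ∧ H.G.Adj u u') ∨ (a = none ∧ b = some v))
  S := insert none (H.S.image some)
  pin := fun a => a.elim ℓ H.pin

/-- the complex log-ratio `R_{G,v;i,j}` -/
def logRatio (H : PCG q) (v : H.V) (i j : Fin q) (w : ℂ) : ℂ :=
  Complex.log (H.Zc v i w / H.Zc v j w)

/-- the vector `P_{G,v}(w) ∈ ℝ^{q−1}` of marginal differences -/
def Pvec (H : PCG q) (v : H.V) (w : ℝ) (j : Fin (q - 1)) : ℝ :=
  (H.addLeaf v ⟨0, by have := j.2; omega⟩).Pr (some v) (Fin.castLE (Nat.sub_le q 1) j) w -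
  (H.addLeaf v ⟨q - 1, by have := j.2; omega⟩).Pr (some v) (Fin.castLE (Nat.sub_le q 1) j) w

/-- the graph `Ĝ_i` of the telescoping procedure: delete `v` from `G`, attach to the
`j`-th neighbor of `v` (for `j ≠ i`) a pinned leaf colored `ℓ₂` if `j < i` and `ℓ₁`
if `j > i`, and attach a free leaf (the vertex `Sum.inr i`) to the `i`-th neighbor. -/
def telescope (H : PCG q) (v : H.V) {d : ℕ} (nbrs : Fin d → H.V)
    (ℓ₁ ℓ₂ : Fin q) (i : Fin d) : PCG q where
  V := ↥{u : H.V | u ≠ v} ⊕ Fin d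
  fin := inferInstance
  G := SimpleGraph.fromRel (fun a b =>
    (∃ u u' : ↥{u : H.V | u ≠ v}, a = Sum.inl u ∧ b = Sum.inl u' ∧ H.G.Adj u.1 u'.1) ∨
    (∃ (u : ↥{u : H.V | u ≠ v}) (j : Fin d), a = Sum.inl u ∧ b = Sum.inr j ∧ u.1 = nbrs j))
  S := (Finset.univ.filter (fun u : ↥{u : H.V | u ≠ v} => u.1 ∈ H.S)).image Sum.inl ∪
       (Finset.univ.filter (fun j : Fin d => j ≠ i)).image Sum.inr
  pin := Sum.elim (fun u => H.pin u.1) (fun j => if (j : ℕ) < (i : ℕ) then ℓ₂ else ℓ₁)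

end PCG

/-- extend a vector indexed by `Fin (q-1)` to `Fin q` by a zero last coordinate -/
def extendLast (q : ℕ) (x : Fin (q - 1) → ℂ) : Fin q → ℂ :=
  fun j => if h : (j : ℕ) < q - 1 then x ⟨j, h⟩ else 0

/-- the polynomial `P_c(w,x) = w^{c₁+1}e^{x₁} + Σ_{j=2}^{q−1} w^{c_j}e^{x_j} + w^{c_q}` -/
def Ppoly (q : ℕ) (c : Fin q → ℕ) (w : ℂ) (x : Fin (q - 1) → ℂ) : ℂ :=
  ∑ j : Fin q, w ^ (c j + if (j : ℕ) = 0 then 1 else 0) * Complex.exp (extendLast q x j)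

/-- the polynomial `Q_c(w,x) = w^{c₁}e^{x₁} + Σ_{j=2}^{q−1} w^{c_j}e^{x_j} + w^{c_q+1}` -/
def Qpoly (q : ℕ) (c : Fin q → ℕ) (w : ℂ) (x : Fin (q - 1) → ℂ) : ℂ :=
  ∑ j : Fin q, w ^ (c j + if (j : ℕ) = q - 1 then 1 else 0) * Complex.exp (extendLast q x j)

/-- the map `F_{w,c}(x) = Log (P_c(w,x)/Q_c(w,x))` -/
def Fmap (q : ℕ) (c : Fin q → ℕ) (w : ℂ) (x : Fin (q - 1) → ℂ) : ℂ :=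
  Complex.log (Ppoly q c w x / Qpoly q c w x)

/-- real version of `extendLast` -/
def extendLastR (q : ℕ) (x : Fin (q - 1) → ℝ) : Fin q → ℝ :=
  fun j => if h : (j : ℕ) < q - 1 then x ⟨j, h⟩ else 0

/-- real version of `Ppoly` -/
def PpolyR (q : ℕ) (c : Fin q → ℕ) (w : ℝ) (x : Fin (q - 1) → ℝ) : ℝ :=
  ∑ j : Fin q, w ^ (c j + if (j : ℕ) = 0 then 1 else 0) * Real.exp (extendLastR q x j)

/-- real version of `Qpoly` -/
def QpolyR (q : ℕ) (c : Fin q → ℕ) (w : ℝ) (x : Fin (q - 1) → ℝ) : ℝ :=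
  ∑ j : Fin q, w ^ (c j + if (j : ℕ) = q - 1 then 1 else 0) * Real.exp (extendLastR q x j)

/-- real version of `Fmap`, i.e. `F_{w,c}` viewed as a real function on `ℝ^{q−1}` -/
def FmapR (q : ℕ) (c : Fin q → ℕ) (w : ℝ) (x : Fin (q - 1) → ℝ) : ℝ :=
  Real.log (PpolyR q c w x / QpolyR q c w x)

namespace PCGAux

open Finset

variable {q : ℕ}

/-- number of neighbors of `u` colored `k` -/
def aCnt (H : PCG q) (u : H.V) (ψ : H.V → Fin q) (k : Fin q) : ℕ :=
  ((H.nbhd u).filter (fun x => ψ x = k)).card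

/-- monochromatic edges avoiding `u` -/
def monoAway (H : PCG q) (u : H.V) (ψ : H.V → Fin q) : ℕ :=
  ((Finset.univ : Finset (Sym2 H.V)).filter
    (fun e => (e ∈ H.G.edgeSet ∧ (e.map ψ).IsDiag) ∧ u ∉ e)).card

lemma card_through (H : PCG q) (u : H.V) (ψ : H.V → Fin q) :
    ((Finset.univ : Finset (Sym2 H.V)).filter
      (fun e => (e ∈ H.G.edgeSet ∧ (e.map ψ).IsDiag) ∧ u ∈ e)).card
    = aCnt H u ψ (ψ u) := by
  classical
  unfold aCnt
  refine Finset.card_bij'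
    (i := fun e he => Sym2.Mem.other ((Finset.mem_filter.mp he).2.2))
    (j := fun x _ => s(u, x)) ?_ ?_ ?_ ?_
  · intro e he
    obtain ⟨-, ⟨hE, hd⟩, hu⟩ := Finset.mem_filter.mp he
    have hsp := Sym2.other_spec hu
    simp only [PCG.nbhd, Finset.mem_filter, Finset.filter_filter, Finset.mem_univ, true_and]
    constructor
    · rw [← SimpleGraph.mem_edgeSet, hsp]; exact hE
    · rw [← hsp, Sym2.map_pair_eq, Sym2.mk_isDiag_iff] at hd
      exact hd.symm
  · intro x hx
    simp only [PCG.nbhd, Finset.mem_filter, Finset.filter_filter, Finset.mem_univ,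
      true_and] at hx
    obtain ⟨hadj, hcol⟩ := hx
    rw [Finset.mem_filter]
    refine ⟨Finset.mem_univ _, ⟨hadj, ?_⟩, Sym2.mem_mk_left u x⟩
    rw [Sym2.map_pair_eq, Sym2.mk_isDiag_iff]; exact hcol.symm
  · intro e he
    exact Sym2.other_spec _
  · intro x hx
    have h2 : s(u, Sym2.Mem.other (Sym2.mem_mk_left u x)) = s(u, x) :=
      Sym2.other_spec (Sym2.mem_mk_left u x)
    exact Sym2.congr_right.mp h2

lemma mono_split (H : PCG q) (u : H.V) (ψ : H.V → Fin q) :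
    H.mono ψ = monoAway H u ψ + aCnt H u ψ (ψ u) := by
  classical
  unfold PCG.mono monoAway
  rw [← card_through H u ψ, add_comm]
  rw [← Finset.card_filter_add_card_filter_not
      (s := (Finset.univ : Finset (Sym2 H.V)).filter
        (fun e => e ∈ H.G.edgeSet ∧ (e.map ψ).IsDiag)) (p := fun e => u ∈ e)]
  rw [Finset.filter_filter, Finset.filter_filter]

end PCGAux
namespace PCGAux

variable {q : ℕ}

lemma monoAway_update (H : PCG q) (u : H.V) (ψ : H.V → Fin q) (k : Fin q) :
    monoAway H u (Function.update ψ u k) = monoAway H u ψ := by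
  classical
  unfold monoAway
  congr 1
  apply Finset.filter_congr
  intro e _
  constructor <;> intro ⟨⟨hE, hd⟩, hu⟩ <;> refine ⟨⟨hE, ?_⟩, hu⟩ <;>
  · induction e using Sym2.ind with
    | _ a b =>
      simp only [Sym2.mem_iff, not_or] at hu
      simpa [Sym2.map_pair_eq, Function.update_of_ne (Ne.symm hu.1),
        Function.update_of_ne (Ne.symm hu.2)] using hd

lemma aCnt_update (H : PCG q) (u : H.V) (ψ : H.V → Fin q) (k c : Fin q) :
    aCnt H u (Function.update ψ u k) c = aCnt H u ψ c := by
  classical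
  unfold aCnt
  congr 1
  apply Finset.filter_congr
  intro x hx
  simp only [PCG.nbhd, Finset.mem_filter] at hx
  rw [Function.update_of_ne hx.2.ne']

lemma mono_update (H : PCG q) (u : H.V) (ψ : H.V → Fin q) (k : Fin q) :
    H.mono (Function.update ψ u k) = monoAway H u ψ + aCnt H u ψ k := by
  rw [mono_split H u, monoAway_update, Function.update_self, aCnt_update]

lemma admissible_update (H : PCG q) (u : H.V) (hu : u ∉ H.S) (ψ : H.V → Fin q) (k : Fin q) :
    H.admissible (Function.update ψ u k) ↔ H.admissible ψ := by
  unfold PCG.admissible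
  constructor <;> intro h x hx <;>
    have hxu : x ≠ u := fun h' => hu (h' ▸ hx)
  · have := h x hx; rwa [Function.update_of_ne hxu] at this
  · rw [Function.update_of_ne hxu]; exact h x hx

lemma sum_aCnt_ge (H : PCG q) {Δ : ℕ} (hmax : H.maxDegLE Δ)
    (u : H.V) (ψ : H.V → Fin q) {w : ℝ} (hw0 : 0 ≤ w) (hw1 : w ≤ 1) :
    ((q : ℝ) - Δ) ≤ ∑ c : Fin q, w ^ aCnt H u ψ c := by
  classical
  set B : Finset (Fin q) := Finset.univ.filter (fun c => aCnt H u ψ c ≠ 0) with hB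
  have hBsub : B ⊆ (H.nbhd u).image ψ := by
    intro c hc
    simp only [hB, Finset.mem_filter] at hc
    obtain ⟨x, hx⟩ := Finset.card_ne_zero.mp hc.2
    simp only [Finset.mem_filter] at hx
    exact Finset.mem_image.mpr ⟨x, hx.1, hx.2⟩
  have hBcard : B.card ≤ Δ :=
    le_trans (Finset.card_le_card hBsub)
      (le_trans Finset.card_image_le (hmax u))
  have h1 : ((q : ℝ) - Δ) ≤ ((Finset.univ \ B).card : ℝ) := by
    rw [Finset.card_sdiff_of_subset (Finset.subset_univ B), Finset.card_univ, Fintype.card_fin]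
    have hBq : B.card ≤ q := le_trans (Finset.card_le_card (Finset.subset_univ B))
      (by simp)
    push_cast [Nat.cast_sub hBq]
    have : (B.card : ℝ) ≤ (Δ : ℝ) := by exact_mod_cast hBcard
    linarith
  refine le_trans h1 ?_
  have h2 : ∑ c ∈ Finset.univ \ B, w ^ aCnt H u ψ c = ((Finset.univ \ B).card : ℝ) := by
    rw [Finset.sum_congr rfl (fun c hc => ?_), Finset.sum_const, nsmul_eq_mul, mul_one]
    simp only [hB, Finset.mem_sdiff, Finset.mem_filter, Finset.mem_univ, true_and,
      not_not] at hc
    rw [hc, pow_zero]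
  rw [← h2]
  exact Finset.sum_le_sum_of_subset_of_nonneg (Finset.subset_univ _)
    (fun c _ _ => pow_nonneg hw0 _)

end PCGAux
namespace PCGAux

variable {q : ℕ}

lemma sum_update_eq (H : PCG q) (u : H.V) (hu : u ∉ H.S) (j c : Fin q) (w : ℝ) :
    ∑ ψ ∈ Finset.univ.filter (fun ψ : H.V → Fin q => H.admissible ψ ∧ ψ u = c),
      w ^ H.mono ψ
    = ∑ ψ ∈ Finset.univ.filter (fun ψ : H.V → Fin q => H.admissible ψ ∧ ψ u = j),
      w ^ H.mono (Function.update ψ u c) := by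
  classical
  refine Finset.sum_nbij' (i := fun ψ => Function.update ψ u j)
    (j := fun ψ => Function.update ψ u c) ?_ ?_ ?_ ?_ ?_
  · intro ψ hψ
    simp only [Finset.mem_filter, Finset.mem_univ, true_and] at *
    exact ⟨(admissible_update H u hu ψ j).mpr hψ.1, Function.update_self u j ψ⟩
  · intro ψ hψ
    simp only [Finset.mem_filter, Finset.mem_univ, true_and] at *
    exact ⟨(admissible_update H u hu ψ c).mpr hψ.1, Function.update_self u c ψ⟩
  · intro ψ hψ
    simp only [Finset.mem_filter, Finset.mem_univ, true_and] at hψ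
    show Function.update (Function.update ψ u j) u c = ψ
    rw [Function.update_idem, ← hψ.2, Function.update_eq_self]
  · intro ψ hψ
    simp only [Finset.mem_filter, Finset.mem_univ, true_and] at hψ
    show Function.update (Function.update ψ u c) u j = ψ
    rw [Function.update_idem, ← hψ.2, Function.update_eq_self]
  · intro ψ hψ
    simp only [Finset.mem_filter, Finset.mem_univ, true_and] at hψ
    show w ^ H.mono ψ = w ^ H.mono (Function.update (Function.update ψ u j) u c)
    rw [Function.update_idem, ← hψ.2, Function.update_eq_self]

lemma Zr_eq_sum_update (H : PCG q) (u : H.V) (hu : u ∉ H.S) (j : Fin q) (w : ℝ) :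
    H.Zr w = ∑ ψ ∈ Finset.univ.filter
        (fun ψ : H.V → Fin q => H.admissible ψ ∧ ψ u = j),
      ∑ c : Fin q, w ^ H.mono (Function.update ψ u c) := by
  classical
  rw [PCG.Zr, ← Finset.sum_fiberwise (g := fun ψ : H.V → Fin q => ψ u)
      (f := fun ψ => w ^ H.mono ψ)]
  have h1 : ∀ c : Fin q,
      ∑ ψ ∈ (Finset.univ.filter (fun ψ : H.V → Fin q => H.admissible ψ)).filter
        (fun ψ => ψ u = c), w ^ H.mono ψ
      = ∑ ψ ∈ Finset.univ.filter
          (fun ψ : H.V → Fin q => H.admissible ψ ∧ ψ u = j),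
        w ^ H.mono (Function.update ψ u c) := by
    intro c
    rw [Finset.filter_filter]
    exact sum_update_eq H u hu j c w
  rw [Finset.sum_congr rfl fun c _ => h1 c]
  exact Finset.sum_comm

/-- Lemma A: the one-vertex upper bound -/
lemma lemA (H : PCG q) {Δ : ℕ} (hmax : H.maxDegLE Δ) (u : H.V) (hu : u ∉ H.S)
    (j : Fin q) {w : ℝ} (hw0 : 0 ≤ w) (hw1 : w ≤ 1) (hΔq : (Δ : ℝ) ≤ q) :
    ((q : ℝ) - Δ) * H.Zcr u j w ≤ H.Zr w := by
  classical
  rw [Zr_eq_sum_update H u hu j w, PCG.Zcr, Finset.mul_sum]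
  refine Finset.sum_le_sum fun ψ hψ => ?_
  have key : w ^ H.mono ψ ≤ w ^ monoAway H u ψ := by
    rw [mono_split H u ψ, pow_add]
    exact mul_le_of_le_one_right (pow_nonneg hw0 _) (pow_le_one₀ hw0 hw1)
  calc ((q : ℝ) - Δ) * w ^ H.mono ψ
      ≤ ((q : ℝ) - Δ) * w ^ monoAway H u ψ := by
        apply mul_le_mul_of_nonneg_left key (by linarith)
    _ ≤ (∑ c : Fin q, w ^ aCnt H u ψ c) * w ^ monoAway H u ψ := by
        apply mul_le_mul_of_nonneg_right (sum_aCnt_ge H hmax u ψ hw0 hw1) (pow_nonneg hw0 _)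
    _ = ∑ c : Fin q, w ^ H.mono (Function.update ψ u c) := by
        rw [Finset.sum_mul]
        refine Finset.sum_congr rfl fun c _ => ?_
        rw [mono_update, pow_add, mul_comm]

end PCGAux
namespace PCGAux

variable {q : ℕ}

lemma Zr_nonneg (H : PCG q) {w : ℝ} (hw0 : 0 ≤ w) : 0 ≤ H.Zr w :=
  Finset.sum_nonneg fun ψ _ => pow_nonneg hw0 _

lemma Zcr_nonneg (H : PCG q) (v : H.V) (j : Fin q) {w : ℝ} (hw0 : 0 ≤ w) :
    0 ≤ H.Zcr v j w :=
  Finset.sum_nonneg fun ψ _ => pow_nonneg hw0 _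

/-- pin vertex `u` to color `c` -/
@[reducible]
def pinAt (H : PCG q) (u : H.V) (c : Fin q) : PCG q :=
  ⟨H.V, H.fin, H.G, insert u H.S, Function.update H.pin u c⟩

lemma adm_pinAt (H : PCG q) (u : H.V) (hu : u ∉ H.S) (c : Fin q) (ψ : H.V → Fin q) :
    (pinAt H u c).admissible ψ ↔ H.admissible ψ ∧ ψ u = c := by
  unfold PCG.admissible pinAt
  simp only [Finset.mem_insert]
  constructor
  · intro h
    refine ⟨fun x hx => ?_, ?_⟩
    · have hxu : x ≠ u := fun h' => hu (h' ▸ hx)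
      have := h x (Or.inr hx)
      rwa [Function.update_of_ne hxu] at this
    · have := h u (Or.inl rfl)
      rwa [Function.update_self] at this
  · rintro ⟨h1, h2⟩ x hx
    rcases hx with rfl | hx
    · rwa [Function.update_self]
    · have hxu : x ≠ u := fun h' => hu (h' ▸ hx)
      rw [Function.update_of_ne hxu]
      exact h1 x hx

lemma Zr_pinAt (H : PCG q) (u : H.V) (hu : u ∉ H.S) (c : Fin q) (w : ℝ) :
    (pinAt H u c).Zr w
    = ∑ ψ ∈ Finset.univ.filter (fun ψ : H.V → Fin q => H.admissible ψ ∧ ψ u = c),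
        w ^ H.mono ψ := by
  unfold PCG.Zr
  apply Finset.sum_congr
  · apply Finset.filter_congr
    intro ψ _
    simpa using adm_pinAt H u hu c ψ
  · intro ψ _; rfl

lemma Zcr_pinAt (H : PCG q) (u : H.V) (hu : u ∉ H.S) (c : Fin q) (v : H.V) (j : Fin q)
    (w : ℝ) :
    (pinAt H u c).Zcr v j w
    = ∑ ψ ∈ Finset.univ.filter
        (fun ψ : H.V → Fin q => (H.admissible ψ ∧ ψ v = j) ∧ ψ u = c),
        w ^ H.mono ψ := by
  unfold PCG.Zcr
  apply Finset.sum_congr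
  · apply Finset.filter_congr
    intro ψ _
    have := adm_pinAt H u hu c ψ
    simp only [this]
    tauto
  · intro ψ _; rfl

lemma Zr_sum_pinAt (H : PCG q) (u : H.V) (hu : u ∉ H.S) (w : ℝ) :
    H.Zr w = ∑ c : Fin q, (pinAt H u c).Zr w := by
  classical
  rw [PCG.Zr, ← Finset.sum_fiberwise (g := fun ψ : H.V → Fin q => ψ u)
      (f := fun ψ => w ^ H.mono ψ)]
  refine Finset.sum_congr rfl fun c _ => ?_
  rw [Zr_pinAt H u hu c w, Finset.filter_filter]

lemma Zcr_sum_pinAt (H : PCG q) (u : H.V) (hu : u ∉ H.S) (v : H.V) (j : Fin q) (w : ℝ) :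
    H.Zcr v j w = ∑ c : Fin q, (pinAt H u c).Zcr v j w := by
  classical
  rw [PCG.Zcr, ← Finset.sum_fiberwise (g := fun ψ : H.V → Fin q => ψ u)
      (f := fun ψ => w ^ H.mono ψ)]
  refine Finset.sum_congr rfl fun c _ => ?_
  rw [Zcr_pinAt H u hu c v j w, Finset.filter_filter]

lemma maxDeg_pinAt (H : PCG q) (u : H.V) (c : Fin q) {Δ : ℕ} (h : H.maxDegLE Δ) :
    (pinAt H u c).maxDegLE Δ := h

lemma Zr_pinAt_eq_Zcr (H : PCG q) (u : H.V) (hu : u ∉ H.S) (c : Fin q) (w : ℝ) :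
    (pinAt H u c).Zr w = H.Zcr u c w := by
  rw [Zr_pinAt H u hu c w, PCG.Zcr]

end PCGAux
namespace PCGAux

variable {q : ℕ}

lemma S_pinAt (H : PCG q) (u : H.V) (c : Fin q) : (pinAt H u c).S = insert u H.S := rfl

lemma nbhd_pinAt (H : PCG q) (u : H.V) (c : Fin q) (v : H.V) :
    (pinAt H u c).nbhd v = H.nbhd v := rfl

lemma pin_pinAt (H : PCG q) (u : H.V) (c : Fin q) :
    (pinAt H u c).pin = Function.update H.pin u c := rfl

lemma freeDeg_pinAt (H : PCG q) (u : H.V) (c : Fin q) (v : H.V)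
    (hnb : u ∈ H.nbhd v) (hu : u ∉ H.S) :
    (pinAt H u c).freeDeg v = H.freeDeg v - 1 := by
  unfold PCG.freeDeg
  rw [nbhd_pinAt, S_pinAt,
    ← Finset.card_erase_of_mem (a := u) (Finset.mem_filter.mpr ⟨hnb, hu⟩)]
  congr 1
  ext x
  simp only [Finset.mem_filter, Finset.mem_erase, Finset.mem_insert, not_or]
  tauto

lemma notblocked_pinAt (H : PCG q) (u : H.V) (hu : u ∉ H.S) (c : Fin q) (v : H.V)
    (j : Fin q) (hc : c ≠ j) (hfree : ¬ H.blockedAt v j) :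
    ¬ (pinAt H u c).blockedAt v j := by
  rintro ⟨x, hx, hxS, hpin⟩
  rw [S_pinAt] at hxS
  rw [pin_pinAt] at hpin
  rcases Finset.mem_insert.mp hxS with h | hxS
  · rw [h, Function.update_self] at hpin
    exact hc hpin
  · have hxu : x ≠ u := fun h' => hu (h' ▸ hxS)
    rw [Function.update_of_ne hxu] at hpin
    exact hfree ⟨x, hx, hxS, hpin⟩

lemma notS_pinAt (H : PCG q) (u : H.V) (c : Fin q) (v : H.V) (hv : v ∉ H.S)
    (hvu : v ≠ u) : v ∉ (pinAt H u c).S := by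
  show v ∉ insert u H.S
  rw [Finset.mem_insert]
  tauto

end PCGAux
namespace PCGAux

variable {q : ℕ}

lemma lemM {Δ : ℕ} {w : ℝ} (hw0 : 0 ≤ w) (hw1 : w ≤ 1) (hD : 2 ≤ (q : ℝ) - Δ) :
    ∀ (n : ℕ) (H : PCG q) (v : H.V) (j : Fin q), H.maxDegLE Δ → v ∉ H.S →
      ¬ H.blockedAt v j → H.freeDeg v ≤ n →
      (1 - 1 / ((q : ℝ) - Δ)) ^ n * H.Zr w ≤ (q : ℝ) * H.Zcr v j w := by
  have hm0 : (0 : ℝ) < (q : ℝ) - Δ := by linarith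
  have hinv1 : 1 / ((q : ℝ) - Δ) ≤ 1 := by rw [div_le_one hm0]; linarith
  have hinv0 : 0 ≤ 1 / ((q : ℝ) - Δ) := le_of_lt (div_pos one_pos hm0)
  set θ : ℝ := 1 - 1 / ((q : ℝ) - Δ) with hθ
  have hθ0 : 0 ≤ θ := by rw [hθ]; linarith
  have hθ1 : θ ≤ 1 := by rw [hθ]; linarith
  intro n
  induction n with
  | zero =>
    intro H v j hmax hv hfree hfd
    rw [pow_zero, one_mul]
    -- base case: all neighbors of v are pinned
    have hallS : ∀ x ∈ H.nbhd v, x ∈ H.S := by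
      intro x hx
      by_contra hxS
      have : x ∈ (H.nbhd v).filter (fun x => x ∉ H.S) := Finset.mem_filter.mpr ⟨hx, hxS⟩
      have hcard : ((H.nbhd v).filter (fun x => x ∉ H.S)).card = 0 :=
        Nat.le_antisymm hfd (Nat.zero_le _)
      rw [Finset.card_eq_zero.mp hcard] at this
      exact absurd this (Finset.notMem_empty x)
    rw [Zr_eq_sum_update H v hv j w, PCG.Zcr, Finset.mul_sum]
    refine Finset.sum_le_sum fun ψ hψ => ?_
    simp only [Finset.mem_filter, Finset.mem_univ, true_and] at hψ
    have hzero : aCnt H v ψ j = 0 := by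
      rw [aCnt, Finset.card_eq_zero, Finset.filter_eq_empty_iff]
      intro x hx hcol
      exact hfree ⟨x, hx, hallS x hx, ((hψ.1 x (hallS x hx)) ▸ hcol :)⟩
    have hmψ : H.mono ψ = monoAway H v ψ := by
      rw [mono_split H v ψ, hψ.2, hzero, add_zero]
    have hbound : ∀ c : Fin q, w ^ H.mono (Function.update ψ v c) ≤ w ^ H.mono ψ := by
      intro c
      rw [mono_update, hmψ, pow_add]
      exact mul_le_of_le_one_right (pow_nonneg hw0 _) (pow_le_one₀ hw0 hw1)
    calc ∑ c : Fin q, w ^ H.mono (Function.update ψ v c)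
        ≤ ∑ _c : Fin q, w ^ H.mono ψ := Finset.sum_le_sum fun c _ => hbound c
      _ = (q : ℝ) * w ^ H.mono ψ := by
          rw [Finset.sum_const, Finset.card_univ, Fintype.card_fin, nsmul_eq_mul]
  | succ n IH =>
    intro H v j hmax hv hfree hfd
    by_cases hle : H.freeDeg v ≤ n
    · calc θ ^ (n + 1) * H.Zr w
          ≤ θ ^ n * H.Zr w := by
            apply mul_le_mul_of_nonneg_right _ (Zr_nonneg H hw0)
            exact pow_le_pow_of_le_one hθ0 hθ1 (Nat.le_succ n)
        _ ≤ (q : ℝ) * H.Zcr v j w := IH H v j hmax hv hfree hle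
    · have hfd' : H.freeDeg v = n + 1 := Nat.le_antisymm hfd (Nat.not_le.mp hle)
      have hpos : 0 < H.freeDeg v := by omega
      have hne : ((H.nbhd v).filter (fun x => x ∉ H.S)).Nonempty :=
        Finset.card_pos.mp hpos
      obtain ⟨u, hu⟩ := hne
      obtain ⟨hnb, huS⟩ := Finset.mem_filter.mp hu
      have hadj : H.G.Adj v u := by
        have := hnb
        simp only [PCG.nbhd, Finset.mem_filter] at this
        exact this.2
      have hvu : v ≠ u := hadj.ne
      -- pin u to each color
      have hIH : ∀ c : Fin q, c ≠ j →
          θ ^ n * (pinAt H u c).Zr w ≤ (q : ℝ) * (pinAt H u c).Zcr v j w := by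
        intro c hc
        apply IH (pinAt H u c) v j (maxDeg_pinAt H u c hmax)
          (notS_pinAt H u c v hv hvu) (notblocked_pinAt H u huS c v j hc hfree)
        rw [freeDeg_pinAt H u c v hnb huS, hfd']
        omega
      have hA : H.Zcr u j w ≤ H.Zr w / ((q : ℝ) - Δ) := by
        rw [le_div_iff₀ hm0]
        have := lemA H hmax u huS j hw0 hw1 (by linarith)
        linarith
      have hZr := Zr_sum_pinAt H u huS w
      have hZcr := Zcr_sum_pinAt H u huS v j w
      have hsplit : ∑ c ∈ Finset.univ.erase j, (pinAt H u c).Zr w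
          = H.Zr w - H.Zcr u j w := by
        have h1 : (∑ c ∈ Finset.univ.erase j, (pinAt H u c).Zr w) + (pinAt H u j).Zr w
            = ∑ c : Fin q, (pinAt H u c).Zr w :=
          Finset.sum_erase_add _ _ (Finset.mem_univ j)
        rw [Zr_pinAt_eq_Zcr H u huS j w] at h1
        linarith [hZr]
      have hsum : θ * H.Zr w ≤ ∑ c ∈ Finset.univ.erase j, (pinAt H u c).Zr w := by
        rw [hsplit, hθ]
        have hid : (1 - 1 / ((q : ℝ) - Δ)) * H.Zr w
            = H.Zr w - H.Zr w / ((q : ℝ) - Δ) := by ring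
        rw [hid]
        linarith
      calc θ ^ (n + 1) * H.Zr w
          = θ ^ n * (θ * H.Zr w) := by ring
        _ ≤ θ ^ n * ∑ c ∈ Finset.univ.erase j, (pinAt H u c).Zr w :=
            mul_le_mul_of_nonneg_left hsum (pow_nonneg hθ0 n)
        _ = ∑ c ∈ Finset.univ.erase j, θ ^ n * (pinAt H u c).Zr w := Finset.mul_sum _ _ _
        _ ≤ ∑ c ∈ Finset.univ.erase j, (q : ℝ) * (pinAt H u c).Zcr v j w := by
            refine Finset.sum_le_sum fun c hc => ?_
            exact hIH c (Finset.mem_erase.mp hc).1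
        _ ≤ ∑ c : Fin q, (q : ℝ) * (pinAt H u c).Zcr v j w := by
            refine Finset.sum_le_sum_of_subset_of_nonneg
              (Finset.erase_subset j Finset.univ) fun c _ _ => ?_
            exact mul_nonneg (Nat.cast_nonneg q) (Zcr_nonneg (pinAt H u c) v j hw0)
        _ = (q : ℝ) * H.Zcr v j w := by rw [← Finset.mul_sum, ← hZcr]

end PCGAux
/-- Basic lower bound on the marginal probability of a free color at the root vertex. -/
theorem prob_basic_lower (α : ℝ) (hα : 0 < α) (Δ q : ℕ) (hΔ : 0 < Δ) (hq : 0 < q)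
    (hqΔ : (1 + α) * (Δ : ℝ) + 1 ≤ (q : ℝ))
    (H : PCG q) (hmax : H.maxDegLE Δ) (v : H.V) (hv : v ∉ H.S)
    (w : ℝ) (hw : w ∈ Set.Icc (0 : ℝ) 1) (hZ : 0 < H.Zr w)
    (j : Fin q) (hfree : ¬ H.blockedAt v j) :
    1 / (Real.exp (1 / α) * (q : ℝ)) ≤ H.Pr v j w := by
  obtain ⟨hw0, hw1⟩ := hw
  have hΔ0 : (0 : ℝ) < Δ := by exact_mod_cast hΔ
  set a : ℝ := α * (Δ : ℝ) with ha_def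
  have ha : 0 < a := mul_pos hα hΔ0
  have hq1 : (Δ : ℝ) + a + 1 ≤ q := by
    have : (1 + α) * (Δ : ℝ) = (Δ : ℝ) + a := by rw [ha_def]; ring
    linarith
  have hDnat : Δ + 2 ≤ q := by
    have h1 : ((Δ + 1 : ℕ) : ℝ) < q := by push_cast; linarith
    have h2 : (Δ + 1 : ℕ) < q := by exact_mod_cast h1
    omega
  have hD : 2 ≤ (q : ℝ) - Δ := by
    have : ((Δ + 2 : ℕ) : ℝ) ≤ q := by exact_mod_cast hDnat
    push_cast at this
    linarith
  have hm0 : (0 : ℝ) < (q : ℝ) - Δ := by linarith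
  set θ : ℝ := 1 - 1 / ((q : ℝ) - Δ) with hθ_def
  have hfd : H.freeDeg v ≤ Δ := le_trans (Finset.card_filter_le _ _) (hmax v)
  have hkey := PCGAux.lemM hw0 hw1 hD Δ H v j hmax hv hfree hfd
  -- analytic bound
  have hb0 : (0 : ℝ) < a / (a + 1) := div_pos ha (by linarith)
  have hθb : a / (a + 1) ≤ θ := by
    have h2 : 1 / ((q : ℝ) - Δ) ≤ 1 / (a + 1) :=
      one_div_le_one_div_of_le (by linarith) (by linarith)
    have h3 : a / (a + 1) = 1 - 1 / (a + 1) := by field_simp; ring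
    rw [hθ_def, h3]
    linarith
  have hθ0 : 0 ≤ θ := le_trans (le_of_lt hb0) hθb
  have hpow : (a / (a + 1)) ^ Δ ≤ θ ^ Δ := pow_le_pow_left₀ (le_of_lt hb0) hθb Δ
  have hexp1 : 1 + 1 / a ≤ Real.exp (1 / a) := by
    have := Real.add_one_le_exp (1 / a); linarith
  have hexp : ((a + 1) / a) ^ Δ ≤ Real.exp (1 / α) := by
    have h4 : (a + 1) / a = 1 + 1 / a := by field_simp
    have h5 : ((a + 1) / a) ^ Δ ≤ (Real.exp (1 / a)) ^ Δ := by
      apply pow_le_pow_left₀ (by positivity)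
      rw [h4]; exact hexp1
    have h6 : (Real.exp (1 / a)) ^ Δ = Real.exp ((Δ : ℝ) * (1 / a)) :=
      (Real.exp_nat_mul _ Δ).symm
    have h7 : (Δ : ℝ) * (1 / a) = 1 / α := by
      rw [ha_def]
      field_simp
    rw [h6, h7] at h5
    exact h5
  have hprod : ((a + 1) / a) ^ Δ * (a / (a + 1)) ^ Δ = 1 := by
    rw [← mul_pow, show ((a + 1) / a) * (a / (a + 1)) = 1 from by field_simp]
    exact one_pow Δ
  have hkey2 : 1 ≤ Real.exp (1 / α) * θ ^ Δ := by
    calc (1 : ℝ) = ((a + 1) / a) ^ Δ * (a / (a + 1)) ^ Δ := hprod.symm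
      _ ≤ Real.exp (1 / α) * θ ^ Δ :=
          mul_le_mul hexp hpow (by positivity) (le_of_lt (Real.exp_pos _))
  -- conclusion
  have hq0 : (0 : ℝ) < q := by exact_mod_cast hq
  have hE : (0 : ℝ) < Real.exp (1 / α) := Real.exp_pos _
  rw [PCG.Pr, le_div_iff₀ hZ]
  have h8 : 1 / (Real.exp (1 / α) * q) ≤ θ ^ Δ / q := by
    rw [div_le_div_iff₀ (by positivity) hq0]
    nlinarith [hkey2, hq0]
  have h9 : θ ^ Δ / q * H.Zr w ≤ H.Zcr v j w := by
    rw [div_mul_eq_mul_div, div_le_iff₀ hq0]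
    linarith [hkey]
  calc 1 / (Real.exp (1 / α) * q) * H.Zr w
      ≤ θ ^ Δ / q * H.Zr w := mul_le_mul_of_nonneg_right h8 (le_of_lt hZ)
    _ ≤ H.Zcr v j w := h9
end
end

section
/- Let q ≥ 2 be an integer, let G be a partially q-colored graph with a free vertex v, and let w ∈ [0,1] be such that Z_{G^{+1}}(w) > 0 and Z_{G^{+q}}(w) > 0. Then: (i) P_{G^{+1},w}[Φ(v)=1] ≤ P_{G^{+q},w}[Φ(v)=1]; (ii) P_{G^{+1},w}[Φ(v)=q] ≥ P_{G^{+q},w}[Φ(v)=q]; and (iii) if moreover Z^1_{G,v}(w) ≤ Z^q_{G,v}(w), then P_{G^{+1},w}[Φ(v)=q] − P_{G^{+q},w}[Φ(v)=q] ≤ (1−w)·P_{G^{+1},w}[Φ(v)=q]. -/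
attribute [local instance 10] Classical.propDecidable

noncomputable section

namespace PCG

variable {q : ℕ}

lemma addLeaf_adj (H : PCG q) (v : H.V) (ℓ : Fin q) (a b : Option H.V) :
    (H.addLeaf v ℓ).G.Adj a b ↔
      (∃ u u' : H.V, a = some u ∧ b = some u' ∧ H.G.Adj u u') ∨
      (a = none ∧ b = some v) ∨ (a = some v ∧ b = none) := by
  show (SimpleGraph.fromRel _).Adj a b ↔ _
  rw [SimpleGraph.fromRel_adj]
  constructor
  · rintro ⟨hne, h | h⟩
    · rcases h with ⟨u, u', rfl, rfl, h⟩ | ⟨rfl, rfl⟩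
      · exact Or.inl ⟨u, u', rfl, rfl, h⟩
      · exact Or.inr (Or.inl ⟨rfl, rfl⟩)
    · rcases h with ⟨u, u', rfl, rfl, h⟩ | ⟨rfl, rfl⟩
      · exact Or.inl ⟨u', u, rfl, rfl, h.symm⟩
      · exact Or.inr (Or.inr ⟨rfl, rfl⟩)
  · rintro (⟨u, u', rfl, rfl, h⟩ | ⟨rfl, rfl⟩ | ⟨rfl, rfl⟩)
    · exact ⟨by simp [h.ne], Or.inl (Or.inl ⟨u, u', rfl, rfl, h⟩)⟩
    · exact ⟨by simp, Or.inl (Or.inr ⟨rfl, rfl⟩)⟩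
    · exact ⟨by simp, Or.inr (Or.inr ⟨rfl, rfl⟩)⟩

lemma addLeaf_mono (H : PCG q) (v : H.V) (ℓ : Fin q) (ψ' : Option H.V → Fin q) :
    (H.addLeaf v ℓ).mono ψ' =
      H.mono (fun u => ψ' (some u)) + (if ψ' (some v) = ψ' none then 1 else 0) := by
  classical
  have key : (Finset.univ.filter
      (fun e : Sym2 (Option H.V) =>
        e ∈ (H.addLeaf v ℓ).G.edgeSet ∧ (e.map ψ').IsDiag)) =
      ((Finset.univ.filter (fun e : Sym2 H.V =>
        e ∈ H.G.edgeSet ∧ (e.map (fun u => ψ' (some u))).IsDiag)).image (Sym2.map some)) ∪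
      (if ψ' (some v) = ψ' none then {s(none, some v)} else ∅) := by
    have hmemE : ∀ x y : Option H.V, s(x, y) ∈ (H.addLeaf v ℓ).G.edgeSet ↔ (H.addLeaf v ℓ).G.Adj x y :=
      fun x y => SimpleGraph.mem_edgeSet _
    ext e
    induction e using Sym2.ind with
    | _ a b =>
      simp only [Finset.mem_filter, Finset.mem_univ, true_and, Finset.mem_union,
        Finset.mem_image, SimpleGraph.mem_edgeSet, hmemE, addLeaf_adj]
      constructor
      · rintro ⟨hadj, hdiag⟩
        rcases hadj with ⟨u, u', rfl, rfl, h⟩ | ⟨rfl, rfl⟩ | ⟨rfl, rfl⟩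
        · refine Or.inl ⟨s(u, u'), ⟨⟨(SimpleGraph.mem_edgeSet _).2 h, ?_⟩, rfl⟩⟩
          simpa using hdiag
        · have : ψ' (some v) = ψ' none := by
            have := hdiag; rw [Sym2.map_pair_eq, Sym2.isDiag_iff_proj_eq] at this
            exact this.symm
          refine Or.inr ?_
          simp [this]
        · have : ψ' (some v) = ψ' none := by
            have := hdiag; rw [Sym2.map_pair_eq, Sym2.isDiag_iff_proj_eq] at this
            exact this
          refine Or.inr ?_
          simp only [this, if_pos, Finset.mem_singleton]
          rw [Sym2.eq_swap]
      · rintro (⟨e', hE, heq⟩ | hmem)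
        · induction e' using Sym2.ind with
          | _ x y =>
            rw [Sym2.map_pair_eq, Sym2.eq_iff] at heq
            obtain ⟨hadj, hdiag⟩ := hE
            rw [SimpleGraph.mem_edgeSet] at hadj
            rw [Sym2.map_pair_eq, Sym2.isDiag_iff_proj_eq] at hdiag
            rcases heq with ⟨rfl, rfl⟩ | ⟨rfl, rfl⟩
            · exact ⟨Or.inl ⟨x, y, rfl, rfl, hadj⟩, by
                rw [Sym2.map_pair_eq, Sym2.isDiag_iff_proj_eq]; exact hdiag⟩
            · exact ⟨Or.inl ⟨y, x, rfl, rfl, hadj.symm⟩, by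
                rw [Sym2.map_pair_eq, Sym2.isDiag_iff_proj_eq]; exact hdiag.symm⟩
        · by_cases hc : ψ' (some v) = ψ' none
          · rw [if_pos hc, Finset.mem_singleton, Sym2.eq_iff] at hmem
            rcases hmem with ⟨rfl, rfl⟩ | ⟨rfl, rfl⟩
            · exact ⟨Or.inr (Or.inl ⟨rfl, rfl⟩), by
                rw [Sym2.map_pair_eq, Sym2.isDiag_iff_proj_eq]; exact hc.symm⟩
            · exact ⟨Or.inr (Or.inr ⟨rfl, rfl⟩), by
                rw [Sym2.map_pair_eq, Sym2.isDiag_iff_proj_eq]; exact hc⟩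
          · rw [if_neg hc] at hmem
            exact absurd hmem (Finset.notMem_empty _)
  have hdisj : Disjoint
      ((Finset.univ.filter (fun e : Sym2 H.V =>
        e ∈ H.G.edgeSet ∧ (e.map (fun u => ψ' (some u))).IsDiag)).image (Sym2.map some))
      (if ψ' (some v) = ψ' none then ({s(none, some v)} : Finset (Sym2 (Option H.V)))
        else ∅) := by
    rw [Finset.disjoint_right]
    intro e he hei
    by_cases hc : ψ' (some v) = ψ' none
    · rw [if_pos hc, Finset.mem_singleton] at he
      subst he
      obtain ⟨e', _, heq⟩ := Finset.mem_image.1 hei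
      induction e' using Sym2.ind with
      | _ x y =>
        rw [Sym2.map_pair_eq, Sym2.eq_iff] at heq
        rcases heq with ⟨h1, _⟩ | ⟨_, h2⟩
        · exact absurd h1 (Option.some_ne_none _)
        · exact absurd h2 (Option.some_ne_none _)
    · rw [if_neg hc] at he
      exact absurd he (Finset.notMem_empty _)
  have main : (Finset.univ.filter
      (fun e : Sym2 (Option H.V) =>
        e ∈ (H.addLeaf v ℓ).G.edgeSet ∧ (e.map ψ').IsDiag)).card =
      H.mono (fun u => ψ' (some u)) + (if ψ' (some v) = ψ' none then 1 else 0) := by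
    rw [key, Finset.card_union_of_disjoint hdisj,
      Finset.card_image_of_injective _ (Sym2.map.injective (Option.some_injective _))]
    congr 1
    by_cases hc : ψ' (some v) = ψ' none <;> simp [hc]
  refine Eq.trans ?_ main
  unfold mono
  exact Finset.card_bij (fun e _ => e) (fun _ h => Finset.mem_filter.2 ⟨Finset.mem_univ _, (Finset.mem_filter.1 h).2⟩) (fun _ _ _ _ h => h)
    (fun b h => ⟨b, Finset.mem_filter.2 ⟨Finset.mem_univ _, (Finset.mem_filter.1 h).2⟩, rfl⟩)

lemma mem_addLeaf_S (H : PCG q) (v : H.V) (ℓ : Fin q) (a : Option H.V) :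
    a ∈ (H.addLeaf v ℓ).S ↔ a = none ∨ ∃ u ∈ H.S, a = some u := by
  show a ∈ insert none (H.S.image some) ↔ _
  simp only [Finset.mem_insert, Finset.mem_image]
  constructor
  · rintro (rfl | ⟨u, hu, rfl⟩)
    · exact Or.inl rfl
    · exact Or.inr ⟨u, hu, rfl⟩
  · rintro (rfl | ⟨u, hu, rfl⟩)
    · exact Or.inl rfl
    · exact Or.inr ⟨u, hu, rfl⟩

lemma addLeaf_Zcr (H : PCG q) (v : H.V) (ℓ j : Fin q) (w : ℝ) :
    (H.addLeaf v ℓ).Zcr (some v) j w = (if j = ℓ then w else 1) * H.Zcr v j w := by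
  classical
  unfold Zcr
  rw [Finset.mul_sum]
  refine Finset.sum_bij' (i := fun ψ' _ => fun u => ψ' (some u))
    (j := fun ψ _ => fun a : Option H.V => a.elim ℓ ψ) ?_ ?_ ?_ ?_ ?_
  · intro ψ' hψ'
    obtain ⟨-, hadm, hval⟩ := Finset.mem_filter.1 hψ'
    refine Finset.mem_filter.2 ⟨Finset.mem_univ _, ?_, hval⟩
    intro u hu
    have := hadm (some u) ((H.mem_addLeaf_S v ℓ _).2 (Or.inr ⟨u, hu, rfl⟩))
    exact this
  · intro ψ hψ
    obtain ⟨-, hadm, hval⟩ := Finset.mem_filter.1 hψ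
    refine Finset.mem_filter.2 ⟨Finset.mem_univ _, ?_, hval⟩
    intro a ha
    rcases (H.mem_addLeaf_S v ℓ a).1 ha with rfl | ⟨u, hu, rfl⟩
    · rfl
    · exact hadm u hu
  · intro ψ' hψ'
    obtain ⟨-, hadm, -⟩ := Finset.mem_filter.1 hψ'
    funext a
    cases a with
    | none => exact (hadm none ((H.mem_addLeaf_S v ℓ _).2 (Or.inl rfl))).symm
    | some u => rfl
  · intro ψ _; rfl
  · intro ψ' hψ'
    obtain ⟨-, hadm, hval⟩ := Finset.mem_filter.1 hψ'
    have hnone : ψ' none = ℓ := hadm none ((H.mem_addLeaf_S v ℓ _).2 (Or.inl rfl))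
    rw [H.addLeaf_mono v ℓ ψ', pow_add, hval, hnone]
    by_cases hc : j = ℓ <;> simp [hc, mul_comm]

lemma Zr_eq_sum_Zcr (H : PCG q) (v : H.V) (w : ℝ) :
    H.Zr w = ∑ j : Fin q, H.Zcr v j w := by
  classical
  rw [Zr, ← Finset.sum_fiberwise (g := fun ψ : H.V → Fin q => ψ v)]
  refine Finset.sum_congr rfl fun j _ => ?_
  rw [Zcr, Finset.filter_filter]

lemma Zcr_nonneg (H : PCG q) (v : H.V) (j : Fin q) {w : ℝ} (hw : 0 ≤ w) :
    0 ≤ H.Zcr v j w :=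
  Finset.sum_nonneg fun _ _ => pow_nonneg hw _

lemma addLeaf_Zr (H : PCG q) (v : H.V) (ℓ : Fin q) (w : ℝ) :
    (H.addLeaf v ℓ).Zr w =
      (∑ j : Fin q, H.Zcr v j w) + (w - 1) * H.Zcr v ℓ w := by
  classical
  rw [(H.addLeaf v ℓ).Zr_eq_sum_Zcr (some v)]
  have : ∀ j : Fin q, (H.addLeaf v ℓ).Zcr (some v) j w =
      H.Zcr v j w + (if j = ℓ then (w - 1) * H.Zcr v j w else 0) := by
    intro j
    rw [H.addLeaf_Zcr v ℓ j w]
    by_cases hc : j = ℓ <;> simp [hc] <;> ring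
  rw [Finset.sum_congr rfl fun j _ => this j, Finset.sum_add_distrib,
    Finset.sum_ite_eq' Finset.univ ℓ (fun j => (w - 1) * H.Zcr v j w)]
  simp

end PCG

/-- Monotonicity properties of the marginal probabilities of the root vertex. -/
theorem marginal_monotonicity (q : ℕ) (hq : 2 ≤ q) (H : PCG q) (v : H.V) (hv : v ∉ H.S)
    (w : ℝ) (hw : w ∈ Set.Icc (0 : ℝ) 1)
    (hZ1 : 0 < (H.addLeaf v ⟨0, by omega⟩).Zr w)
    (hZq : 0 < (H.addLeaf v ⟨q - 1, by omega⟩).Zr w) :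
    (H.addLeaf v ⟨0, by omega⟩).Pr (some v) ⟨0, by omega⟩ w ≤
      (H.addLeaf v ⟨q - 1, by omega⟩).Pr (some v) ⟨0, by omega⟩ w ∧
    (H.addLeaf v ⟨q - 1, by omega⟩).Pr (some v) ⟨q - 1, by omega⟩ w ≤
      (H.addLeaf v ⟨0, by omega⟩).Pr (some v) ⟨q - 1, by omega⟩ w ∧
    (H.Zcr v ⟨0, by omega⟩ w ≤ H.Zcr v ⟨q - 1, by omega⟩ w →
      (H.addLeaf v ⟨0, by omega⟩).Pr (some v) ⟨q - 1, by omega⟩ w -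
        (H.addLeaf v ⟨q - 1, by omega⟩).Pr (some v) ⟨q - 1, by omega⟩ w ≤
      (1 - w) * (H.addLeaf v ⟨0, by omega⟩).Pr (some v) ⟨q - 1, by omega⟩ w) := by
  obtain ⟨hw0, hw1⟩ := hw
  have key : ∀ ℓ jj : Fin q,
      (H.addLeaf v ℓ).Pr (some v) jj w =
      (if jj = ℓ then w else 1) * H.Zcr v jj w /
        ((∑ j : Fin q, H.Zcr v j w) + (w - 1) * H.Zcr v ℓ w) := by
    intro ℓ jj
    unfold PCG.Pr
    rw [H.addLeaf_Zcr v ℓ jj w, H.addLeaf_Zr v ℓ w]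
  have h1 : ¬ (0 : ℕ) = q - 1 := by omega
  have h2 : ¬ (q - 1 : ℕ) = 0 := by omega
  have hZ1' : 0 < (∑ j : Fin q, H.Zcr v j w) + (w - 1) * H.Zcr v ⟨0, by omega⟩ w := by
    rw [← H.addLeaf_Zr v ⟨0, by omega⟩ w]; exact hZ1
  have hZq' : 0 < (∑ j : Fin q, H.Zcr v j w) + (w - 1) * H.Zcr v ⟨q - 1, by omega⟩ w := by
    rw [← H.addLeaf_Zr v ⟨q - 1, by omega⟩ w]; exact hZq
  simp only [key, Fin.mk.injEq, h1, h2, if_true, if_false, ite_true, ite_false,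
    eq_self_iff_true, one_mul]
  set a0 := H.Zcr v ⟨0, by omega⟩ w with ha0def
  set aq := H.Zcr v ⟨q - 1, by omega⟩ w with haqdef
  set A := ∑ j : Fin q, H.Zcr v j w with hAdef
  have ha0 : 0 ≤ a0 := H.Zcr_nonneg v _ hw0
  have haq : 0 ≤ aq := H.Zcr_nonneg v _ hw0
  have hA0 : a0 ≤ A := by
    rw [ha0def, hAdef]
    exact Finset.single_le_sum (f := fun j => H.Zcr v j w)
      (fun j _ => H.Zcr_nonneg v j hw0) (Finset.mem_univ _)
  have hAq : aq ≤ A := by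
    rw [haqdef, hAdef]
    exact Finset.single_le_sum (f := fun j => H.Zcr v j w)
      (fun j _ => H.Zcr_nonneg v j hw0) (Finset.mem_univ _)
  refine ⟨?_, ?_, ?_⟩
  · -- w * a0 / Z1 ≤ a0 / Zq
    rw [div_le_div_iff₀ hZ1' hZq']
    have key1 : 0 ≤ a0 * (1 - w) * (A - a0 + w * aq) := by
      have h3 : 0 ≤ A - a0 + w * aq := by
        have := mul_nonneg hw0 haq; linarith
      exact mul_nonneg (mul_nonneg ha0 (by linarith)) h3
    nlinarith [key1]
  · -- w * aq / Zq ≤ aq / Z1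
    rw [div_le_div_iff₀ hZq' hZ1']
    have key2 : 0 ≤ aq * (1 - w) * (A - aq + w * a0) := by
      have h3 : 0 ≤ A - aq + w * a0 := by
        have := mul_nonneg hw0 ha0; linarith
      exact mul_nonneg (mul_nonneg haq (by linarith)) h3
    nlinarith [key2]
  · -- the third inequality
    intro hle
    have hZle : A + (w - 1) * aq ≤ A + (w - 1) * a0 := by nlinarith
    rw [div_sub_div _ _ hZ1'.ne' hZq'.ne', ← mul_div_assoc,
      div_le_div_iff₀ (mul_pos hZ1' hZq') hZ1']
    nlinarith [mul_nonneg (mul_nonneg (mul_nonneg hw0 haq) hZ1'.le)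
      (sub_nonneg.2 hZle), hZ1', hZq']
end
end
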